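/- For every non-trivial product distribution P on {0,1}^n and every antichain A ⊆ {0,1}^n, the sum over ℓ ∈ {0,1,...,n} of the conditional probabilities Pr_{z∼P}[z ∈ A | |z| = ℓ] is at most 1. -/

import Mathlib

open Finset


namespace LymAux

variable (ρ σ : ℕ → ℝ)

/-- weight of a set `s` relative to ground set `U`. -/
noncomputable def wt (U s : Finset ℕ) : ℝ := ∏ j ∈ U, if j ∈ s then ρ j else σ j

/-- total weight of a family. -/
noncomputable def tw (U : Finset ℕ) (F : Finset (Finset ℕ)) : ℝ := ∑ s ∈ F, wt ρ σ U s

/-- total weight of level `ℓ`. -/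
noncomputable def WL (U : Finset ℕ) (ℓ : ℕ) : ℝ := tw ρ σ U (U.powersetCard ℓ)

variable {ρ σ}

section basic

variable (hρ : ∀ j, 0 < ρ j) (hσ : ∀ j, 0 < σ j)

include hρ hσ in
lemma wt_pos (U s : Finset ℕ) : 0 < wt ρ σ U s := by
  refine Finset.prod_pos fun j _ => ?_
  split <;> [exact hρ j; exact hσ j]

include hρ hσ in
lemma wt_nonneg (U s : Finset ℕ) : 0 ≤ wt ρ σ U s := (wt_pos hρ hσ U s).le

include hρ hσ in
lemma tw_nonneg (U : Finset ℕ) (F : Finset (Finset ℕ)) : 0 ≤ tw ρ σ U F :=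
  Finset.sum_nonneg fun s _ => wt_nonneg hρ hσ U s

include hρ hσ in
lemma WL_nonneg (U : Finset ℕ) (ℓ : ℕ) : 0 ≤ WL ρ σ U ℓ := tw_nonneg hρ hσ _ _

lemma wt_insert {x : ℕ} {U : Finset ℕ} (hx : x ∉ U) (s : Finset ℕ) :
    wt ρ σ (insert x U) s = (if x ∈ s then ρ x else σ x) * wt ρ σ U s := by
  rw [wt, Finset.prod_insert hx]; rfl

lemma wt_insert_pt {x : ℕ} {U : Finset ℕ} (hx : x ∉ U) (s : Finset ℕ) :
    wt ρ σ U (insert x s) = wt ρ σ U s := by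
  refine Finset.prod_congr rfl fun j hj => ?_
  have : j ≠ x := fun h => hx (h ▸ hj)
  simp [Finset.mem_insert, this]

lemma not_mem_of_mem_powersetCard {x : ℕ} {U s : Finset ℕ} (hx : x ∉ U) {k : ℕ}
    (hs : s ∈ U.powersetCard k) : x ∉ s := by
  rw [Finset.mem_powersetCard] at hs
  exact fun h => hx (hs.1 h)

lemma erase_insert_self {x : ℕ} {s : Finset ℕ} (hx : x ∉ s) : (insert x s).erase x = s :=
  Finset.erase_insert hx

lemma WL_zero (U : Finset ℕ) : WL ρ σ U 0 = wt ρ σ U ∅ := by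
  simp [WL, tw, Finset.powersetCard_zero]

lemma WL_eq_zero {U : Finset ℕ} {ℓ : ℕ} (h : U.card < ℓ) : WL ρ σ U ℓ = 0 := by
  rw [WL, tw, Finset.powersetCard_eq_empty.2 h, Finset.sum_empty]

include hρ hσ in
lemma WL_pos {U : Finset ℕ} {ℓ : ℕ} (h : ℓ ≤ U.card) : 0 < WL ρ σ U ℓ := by
  obtain ⟨s, hs⟩ := (Finset.powersetCard_nonempty (s := U)).2 h
  exact Finset.sum_pos' (fun t _ => wt_nonneg hρ hσ U t) ⟨s, hs, wt_pos hρ hσ U s⟩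

lemma disj_level_image {x : ℕ} {U : Finset ℕ} (hx : x ∉ U) (k j : ℕ) :
    Disjoint (U.powersetCard k) ((U.powersetCard j).image (insert x)) := by
  rw [Finset.disjoint_left]
  rintro s hs hs'
  obtain ⟨u, _, rfl⟩ := Finset.mem_image.1 hs'
  exact not_mem_of_mem_powersetCard hx hs (Finset.mem_insert_self x u)

lemma insert_injOn_level {x : ℕ} {U : Finset ℕ} (hx : x ∉ U) (j : ℕ) :
    ∀ u ∈ U.powersetCard j, ∀ v ∈ U.powersetCard j, insert x u = insert x v → u = v := by
  intro u hu v hv h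
  have hxu : x ∉ u := not_mem_of_mem_powersetCard hx hu
  have hxv : x ∉ v := not_mem_of_mem_powersetCard hx hv
  rw [← erase_insert_self hxu, h, erase_insert_self hxv]

lemma WL_insert {x : ℕ} {U : Finset ℕ} (hx : x ∉ U) (m : ℕ) :
    WL ρ σ (insert x U) (m + 1) =
      σ x * WL ρ σ U (m + 1) + ρ x * WL ρ σ U m := by
  rw [WL, tw, Finset.powersetCard_succ_insert hx,
    Finset.sum_union (disj_level_image hx (m+1) m),
    Finset.sum_image (insert_injOn_level hx m)]
  rw [WL, WL, tw, tw, Finset.mul_sum, Finset.mul_sum]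
  congr 1
  · refine Finset.sum_congr rfl fun s hs => ?_
    rw [wt_insert hx, if_neg (not_mem_of_mem_powersetCard hx hs)]
  · refine Finset.sum_congr rfl fun s hs => ?_
    rw [wt_insert hx, if_pos (Finset.mem_insert_self x s), wt_insert_pt hx]

lemma WL_insert_zero {x : ℕ} {U : Finset ℕ} (hx : x ∉ U) :
    WL ρ σ (insert x U) 0 = σ x * WL ρ σ U 0 := by
  rw [WL_zero, WL_zero, wt_insert hx, if_neg (Finset.notMem_empty x)]

end basic
section LC
variable (hρ : ∀ j, 0 < ρ j) (hσ : ∀ j, 0 < σ j)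

include hρ hσ in
/-- Log-concavity (in the chained two-gap form) of the level weights. -/
lemma WL_log_concave (U : Finset ℕ) :
    ∀ k l : ℕ, k ≤ l → WL ρ σ U (l + 1) * WL ρ σ U k ≤ WL ρ σ U l * WL ρ σ U (k + 1) := by
  induction U using Finset.induction_on with
  | empty =>
    intro k l hkl
    have h1 : WL ρ σ (∅ : Finset ℕ) (l + 1) = 0 := WL_eq_zero (by simp)
    rw [h1, zero_mul]
    exact mul_nonneg (WL_nonneg hρ hσ _ _) (WL_nonneg hρ hσ _ _)
  | @insert x U hx IH =>
    intro k l hkl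
    rcases eq_or_lt_of_le hkl with rfl | hlt
    · rw [mul_comm]
    -- now k < l, so l = lp + 1
    obtain ⟨lp, rfl⟩ : ∃ lp, l = lp + 1 := ⟨l - 1, by omega⟩
    have W0 : ∀ j, 0 ≤ WL ρ σ U j := WL_nonneg hρ hσ U
    have hax : 0 < σ x := hσ x
    have hcx : 0 < ρ x := hρ x
    rcases Nat.eq_zero_or_eq_succ_pred k with rfl | hk
    · -- k = 0
      rw [WL_insert hx, WL_insert hx, WL_insert_zero hx, WL_insert hx]
      have i1 := IH 0 (lp + 1) (Nat.zero_le _)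
      rw [WL_zero] at *
      have hw0 : 0 ≤ wt ρ σ U ∅ := wt_nonneg hρ hσ U ∅
      nlinarith [mul_nonneg (mul_nonneg hax.le hcx.le) (mul_nonneg (W0 lp) (W0 1)),
        mul_nonneg (mul_nonneg hcx.le hcx.le) (mul_nonneg (W0 lp) hw0),
        mul_le_mul_of_nonneg_left i1 (mul_nonneg hax.le hax.le)]
    · obtain ⟨kp, rfl⟩ : ∃ kp, k = kp + 1 := ⟨k - 1, hk⟩
      have hkplp : kp + 1 ≤ lp := by omega
      rw [WL_insert hx, WL_insert hx, WL_insert hx, WL_insert hx]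
      have i1 := IH (kp + 1) (lp + 1) (by omega)
      have i2 := IH kp lp (by omega)
      have i3 := IH kp (lp + 1) (by omega)
      have i4 := IH (kp + 1) lp hkplp
      nlinarith [mul_le_mul_of_nonneg_left i1 (mul_nonneg hax.le hax.le),
        mul_le_mul_of_nonneg_left i2 (mul_nonneg hcx.le hcx.le),
        mul_le_mul_of_nonneg_left i3 (mul_nonneg hax.le hcx.le),
        mul_le_mul_of_nonneg_left i4 (mul_nonneg hax.le hcx.le)]

end LC
section Flow

lemma mem_level_of_not_mem {x : ℕ} {U s : Finset ℕ} {k : ℕ}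
    (hs : s ∈ (insert x U).powersetCard k) (hxs : x ∉ s) : s ∈ U.powersetCard k := by
  rw [Finset.mem_powersetCard] at hs ⊢
  exact ⟨fun j hj => (Finset.mem_insert.1 (hs.1 hj)).resolve_left (fun h => hxs (h ▸ hj)), hs.2⟩

lemma insert_mem_level {x : ℕ} {U u : Finset ℕ} (hx : x ∉ U) {k : ℕ}
    (hu : u ∈ U.powersetCard k) : insert x u ∈ (insert x U).powersetCard (k + 1) := by
  rw [Finset.mem_powersetCard] at hu ⊢
  refine ⟨Finset.insert_subset_insert x hu.1, ?_⟩
  rw [Finset.card_insert_of_notMem (fun h => hx (hu.1 h)), hu.2]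

variable (ρ σ) in
/-- A normalized flow between levels `m` and `m+1` of the cube on `U`. -/
def IsFlow (U : Finset ℕ) (m : ℕ) (f : Finset ℕ → Finset ℕ → ℝ) : Prop :=
  (∀ s t, 0 ≤ f s t) ∧
  (∀ s t, f s t ≠ 0 → s ∈ U.powersetCard m ∧ t ∈ U.powersetCard (m + 1) ∧ s ⊆ t) ∧
  (∀ s ∈ U.powersetCard m,
    ∑ t ∈ U.powersetCard (m + 1), f s t = wt ρ σ U s * WL ρ σ U (m + 1)) ∧
  (∀ t ∈ U.powersetCard (m + 1),
    ∑ s ∈ U.powersetCard m, f s t = wt ρ σ U t * WL ρ σ U m)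

variable (hρ : ∀ j, 0 < ρ j) (hσ : ∀ j, 0 < σ j)

include hρ hσ in
lemma flow_zero (U : Finset ℕ) : ∃ f, IsFlow ρ σ U 0 f := by
  classical
  refine ⟨fun s t => if s = ∅ ∧ t ∈ U.powersetCard 1 then wt ρ σ U ∅ * wt ρ σ U t else 0,
    fun s t => ?_, fun s t h => ?_, fun s hs => ?_, fun t ht => ?_⟩ <;> dsimp only at *
  · split
    · exact mul_nonneg (wt_nonneg hρ hσ _ _) (wt_nonneg hρ hσ _ _)
    · exact le_refl 0
  · by_cases hc : s = ∅ ∧ t ∈ U.powersetCard 1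
    · obtain ⟨rfl, ht⟩ := hc
      exact ⟨by simp [Finset.powersetCard_zero], ht, Finset.empty_subset t⟩
    · exact (h (if_neg hc)).elim
  · rw [Finset.powersetCard_zero, Finset.mem_singleton] at hs
    subst hs
    rw [WL, tw, Finset.mul_sum]
    refine Finset.sum_congr rfl fun t ht => ?_
    rw [if_pos ⟨rfl, ht⟩]
  · rw [Finset.powersetCard_zero, Finset.sum_singleton, if_pos ⟨rfl, ht⟩, WL_zero, mul_comm]

include hρ hσ in
lemma flow_exists (U : Finset ℕ) : ∀ m : ℕ, ∃ f, IsFlow ρ σ U m f := by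
  classical
  induction U using Finset.induction_on with
  | empty =>
    rintro (_ | mp)
    · exact flow_zero hρ hσ ∅
    · refine ⟨fun _ _ => 0, fun s t => le_refl 0, fun s t h => absurd rfl h,
        fun s hs => ?_, fun t ht => ?_⟩
      · rw [Finset.powersetCard_eq_empty.2 (by simp)] at hs
        exact absurd hs (Finset.notMem_empty s)
      · rw [Finset.powersetCard_eq_empty.2 (by simp)] at ht
        exact absurd ht (Finset.notMem_empty t)
  | @insert x U hx IH =>
    rintro (_ | mp)
    · exact flow_zero hρ hσ _
    by_cases hm : U.card < mp + 1
    · have hlev : (insert x U).powersetCard (mp + 1 + 1) = ∅ :=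
        Finset.powersetCard_eq_empty.2 (by rw [Finset.card_insert_of_notMem hx]; omega)
      have hW : WL ρ σ (insert x U) (mp + 1 + 1) = 0 := by
        rw [WL, tw, hlev, Finset.sum_empty]
      refine ⟨fun _ _ => 0, fun s t => le_refl 0, fun s t h => absurd rfl h,
        fun s hs => ?_, fun t ht => ?_⟩
      · rw [Finset.sum_const, hW, mul_zero, smul_zero]
      · rw [hlev] at ht
        exact absurd ht (Finset.notMem_empty t)
    push_neg at hm
    obtain ⟨f1, hf1n, hf1s, hf1r, hf1c⟩ := IH (mp + 1)
    obtain ⟨f0, hf0n, hf0s, hf0r, hf0c⟩ := IH mp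
    set a := σ x with ha
    set c := ρ x with hc
    set Wq := WL ρ σ U mp with hWq
    set Wm := WL ρ σ U (mp + 1) with hWm
    set Wp := WL ρ σ U (mp + 1 + 1) with hWp
    have hWmpos : 0 < Wm := WL_pos hρ hσ hm
    have hWqnn : 0 ≤ Wq := WL_nonneg hρ hσ U mp
    have hWpnn : 0 ≤ Wp := WL_nonneg hρ hσ U (mp + 1 + 1)
    have hapos : 0 < a := hσ x
    have hcpos : 0 < c := hρ x
    have hlc : Wp * Wq ≤ Wm * Wm := WL_log_concave hρ hσ U mp (mp + 1) (Nat.le_succ mp)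
    set A := a ^ 2 + a * c * Wq / Wm with hA
    set B := c ^ 2 + c * a * Wp / Wm with hB
    set G := a * c * (Wm * Wm - Wq * Wp) / Wm with hG
    have hAnn : 0 ≤ A := by positivity
    have hBnn : 0 ≤ B := by positivity
    have hGnn : 0 ≤ G := by
      apply div_nonneg _ hWmpos.le
      have : 0 ≤ Wm * Wm - Wq * Wp := by nlinarith
      positivity
    -- the flow
    refine ⟨fun s t =>
      if x ∈ s then (if x ∈ t then B * f0 (s.erase x) (t.erase x) else 0)
      else if x ∈ t then
        (if t = insert x s ∧ s ∈ U.powersetCard (mp + 1) then G * wt ρ σ U s else 0)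
      else A * f1 s t, fun s t => ?_, fun s t h => ?_, fun s hs => ?_, fun t ht => ?_⟩
    · -- nonnegativity
      dsimp only
      split_ifs with h1 h2 h3 h4
      · exact mul_nonneg hBnn (hf0n _ _)
      · exact le_refl 0
      · exact mul_nonneg hGnn (wt_nonneg hρ hσ _ _)
      · exact le_refl 0
      · exact mul_nonneg hAnn (hf1n _ _)
    · -- support
      dsimp only at h
      split_ifs at h with h1 h2 h3 h4
      · -- x ∈ s, x ∈ t
        have hf : f0 (s.erase x) (t.erase x) ≠ 0 := fun h0 => h (by rw [h0, mul_zero])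
        obtain ⟨hs0, ht0, hst0⟩ := hf0s _ _ hf
        have hs : s ∈ (insert x U).powersetCard (mp + 1) := by
          rw [← Finset.insert_erase h1]
          exact insert_mem_level hx hs0
        have ht : t ∈ (insert x U).powersetCard (mp + 1 + 1) := by
          rw [← Finset.insert_erase h2]
          exact insert_mem_level hx ht0
        refine ⟨hs, ht, fun j hj => ?_⟩
        rcases eq_or_ne j x with rfl | hjx
        · exact h2
        · exact Finset.mem_of_mem_erase (hst0 (Finset.mem_erase.2 ⟨hjx, hj⟩))
      · exact absurd rfl h
      · -- x ∉ s, x ∈ t, t = insert x s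
        obtain ⟨rfl, hs0⟩ := h4
        exact ⟨Finset.powersetCard_mono (Finset.subset_insert x U) hs0,
          insert_mem_level hx hs0, Finset.subset_insert x s⟩
      · exact absurd rfl h
      · have hf : f1 s t ≠ 0 := fun h0 => h (by rw [h0, mul_zero])
        obtain ⟨hs0, ht0, hst0⟩ := hf1s _ _ hf
        exact ⟨Finset.powersetCard_mono (Finset.subset_insert x U) hs0,
          Finset.powersetCard_mono (Finset.subset_insert x U) ht0, hst0⟩
    · -- row sums
      rw [Finset.powersetCard_succ_insert hx (mp + 1),
        Finset.sum_union (disj_level_image hx (mp + 1 + 1) (mp + 1)),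
        Finset.sum_image (insert_injOn_level hx (mp + 1))]
      by_cases hxs : x ∈ s
      · obtain ⟨s', hxs', rfl⟩ : ∃ s', x ∉ s' ∧ s = insert x s' :=
          ⟨s.erase x, Finset.notMem_erase _ _, (Finset.insert_erase hxs).symm⟩
        have hs' : s' ∈ U.powersetCard mp := by
          rw [Finset.mem_powersetCard] at hs ⊢
          constructor
          · intro j hj
            have hjx : j ≠ x := fun h => hxs' (h ▸ hj)
            exact (Finset.mem_insert.1 (hs.1 (Finset.mem_insert_of_mem hj))).resolve_left hjx
          · have hcard := hs.2
            rw [Finset.card_insert_of_notMem hxs'] at hcard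
            omega
        have e1 : ∑ t ∈ U.powersetCard (mp + 1 + 1),
            (if x ∈ insert x s' then (if x ∈ t then B * f0 ((insert x s').erase x) (t.erase x) else 0)
             else if x ∈ t then (if t = insert x (insert x s') ∧ insert x s' ∈ U.powersetCard (mp + 1)
               then G * wt ρ σ U (insert x s') else 0) else A * f1 (insert x s') t) = 0 := by
          refine Finset.sum_eq_zero fun t ht => ?_
          rw [if_pos (Finset.mem_insert_self x s'),
            if_neg (not_mem_of_mem_powersetCard hx ht)]
        rw [e1, zero_add]
        have e2 : ∀ u ∈ U.powersetCard (mp + 1),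
            (if x ∈ insert x s' then (if x ∈ insert x u then
               B * f0 ((insert x s').erase x) ((insert x u).erase x) else 0)
             else if x ∈ insert x u then (if insert x u = insert x (insert x s') ∧
               insert x s' ∈ U.powersetCard (mp + 1) then G * wt ρ σ U (insert x s') else 0)
             else A * f1 (insert x s') (insert x u)) = B * f0 s' u := by
          intro u hu
          rw [if_pos (Finset.mem_insert_self x s'), if_pos (Finset.mem_insert_self x u),
            Finset.erase_insert hxs',
            Finset.erase_insert (not_mem_of_mem_powersetCard hx hu)]
        rw [Finset.sum_congr rfl e2, ← Finset.mul_sum, hf0r s' hs',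
          wt_insert hx, if_pos (Finset.mem_insert_self x s'), wt_insert_pt hx,
          WL_insert hx]
        show B * (wt ρ σ U s' * Wm) = c * wt ρ σ U s' * (a * Wp + c * Wm)
        rw [hB]
        field_simp
        ring
      · have hs0 : s ∈ U.powersetCard (mp + 1) := mem_level_of_not_mem hs hxs
        have e1 : ∑ t ∈ U.powersetCard (mp + 1 + 1),
            (if x ∈ s then (if x ∈ t then B * f0 (s.erase x) (t.erase x) else 0)
             else if x ∈ t then (if t = insert x s ∧ s ∈ U.powersetCard (mp + 1)
               then G * wt ρ σ U s else 0) else A * f1 s t)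
            = A * (wt ρ σ U s * WL ρ σ U (mp + 1 + 1)) := by
          rw [← hf1r s hs0, Finset.mul_sum]
          refine Finset.sum_congr rfl fun t ht => ?_
          rw [if_neg hxs, if_neg (not_mem_of_mem_powersetCard hx ht)]
        have e2 : ∀ u ∈ U.powersetCard (mp + 1),
            (if x ∈ s then (if x ∈ insert x u then B * f0 (s.erase x) ((insert x u).erase x) else 0)
             else if x ∈ insert x u then (if insert x u = insert x s ∧ s ∈ U.powersetCard (mp + 1)
               then G * wt ρ σ U s else 0) else A * f1 s (insert x u))
            = (if u = s then G * wt ρ σ U s else 0) := by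
          intro u hu
          rw [if_neg hxs, if_pos (Finset.mem_insert_self x u)]
          congr 1
          rw [eq_iff_iff]
          constructor
          · rintro ⟨h1, -⟩
            exact insert_injOn_level hx (mp + 1) u hu s hs0 h1
          · rintro rfl
            exact ⟨rfl, hs0⟩
        rw [e1, Finset.sum_congr rfl e2, Finset.sum_ite_eq' (U.powersetCard (mp + 1)) s,
          if_pos hs0, wt_insert hx, if_neg hxs, WL_insert hx]
        show A * (wt ρ σ U s * Wp) + G * wt ρ σ U s = a * wt ρ σ U s * (a * Wp + c * Wm)
        rw [hA, hG]
        field_simp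
        ring
    · -- column sums
      rw [Finset.powersetCard_succ_insert hx mp,
        Finset.sum_union (disj_level_image hx (mp + 1) mp),
        Finset.sum_image (insert_injOn_level hx mp)]
      by_cases hxt : x ∈ t
      · obtain ⟨t', hxt', rfl⟩ : ∃ t', x ∉ t' ∧ t = insert x t' :=
          ⟨t.erase x, Finset.notMem_erase _ _, (Finset.insert_erase hxt).symm⟩
        have ht' : t' ∈ U.powersetCard (mp + 1) := by
          refine Finset.mem_powersetCard.2 ⟨?_, ?_⟩
          · intro j hj
            have hjx : j ≠ x := fun h => hxt' (h ▸ hj)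
            have := (Finset.mem_powersetCard.1 ht).1 (Finset.mem_insert_of_mem hj)
            exact (Finset.mem_insert.1 this).resolve_left hjx
          · have hcard := (Finset.mem_powersetCard.1 ht).2
            rw [Finset.card_insert_of_notMem hxt'] at hcard
            omega
        have e1 : ∑ s ∈ U.powersetCard (mp + 1),
            (if x ∈ s then (if x ∈ insert x t' then B * f0 (s.erase x) ((insert x t').erase x) else 0)
             else if x ∈ insert x t' then (if insert x t' = insert x s ∧ s ∈ U.powersetCard (mp + 1)
               then G * wt ρ σ U s else 0) else A * f1 s (insert x t'))
            = G * wt ρ σ U t' := by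
          have e2 : ∀ s ∈ U.powersetCard (mp + 1),
              (if x ∈ s then (if x ∈ insert x t' then B * f0 (s.erase x) ((insert x t').erase x) else 0)
               else if x ∈ insert x t' then (if insert x t' = insert x s ∧ s ∈ U.powersetCard (mp + 1)
                 then G * wt ρ σ U s else 0) else A * f1 s (insert x t'))
              = (if s = t' then G * wt ρ σ U s else 0) := by
            intro s hs
            rw [if_neg (not_mem_of_mem_powersetCard hx hs), if_pos (Finset.mem_insert_self x t')]
            congr 1
            rw [eq_iff_iff]
            constructor
            · rintro ⟨h1, -⟩
              exact (insert_injOn_level hx (mp + 1) t' ht' s hs h1).symm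
            · rintro rfl
              exact ⟨rfl, hs⟩
          rw [Finset.sum_congr rfl e2, Finset.sum_ite_eq' (U.powersetCard (mp + 1)) t',
            if_pos ht']
        have e3 : ∀ s' ∈ U.powersetCard mp,
            (if x ∈ insert x s' then (if x ∈ insert x t' then
               B * f0 ((insert x s').erase x) ((insert x t').erase x) else 0)
             else if x ∈ insert x t' then (if insert x t' = insert x (insert x s') ∧
               insert x s' ∈ U.powersetCard (mp + 1) then G * wt ρ σ U (insert x s') else 0)
             else A * f1 (insert x s') (insert x t'))
            = B * f0 s' t' := by
          intro s' hs'
          rw [if_pos (Finset.mem_insert_self x s'), if_pos (Finset.mem_insert_self x t'),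
            Finset.erase_insert (not_mem_of_mem_powersetCard hx hs'),
            Finset.erase_insert hxt']
        rw [e1, Finset.sum_congr rfl e3, ← Finset.mul_sum, hf0c t' ht',
          wt_insert hx, if_pos (Finset.mem_insert_self x t'), wt_insert_pt hx,
          WL_insert hx]
        show G * wt ρ σ U t' + B * (wt ρ σ U t' * Wq) = c * wt ρ σ U t' * (a * Wm + c * Wq)
        rw [hB, hG]
        field_simp
        ring
      · have ht0 : t ∈ U.powersetCard (mp + 1 + 1) := mem_level_of_not_mem ht hxt
        have e1 : ∑ s ∈ U.powersetCard (mp + 1),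
            (if x ∈ s then (if x ∈ t then B * f0 (s.erase x) (t.erase x) else 0)
             else if x ∈ t then (if t = insert x s ∧ s ∈ U.powersetCard (mp + 1)
               then G * wt ρ σ U s else 0) else A * f1 s t)
            = A * (wt ρ σ U t * WL ρ σ U (mp + 1)) := by
          rw [← hf1c t ht0, Finset.mul_sum]
          refine Finset.sum_congr rfl fun s hs => ?_
          rw [if_neg (not_mem_of_mem_powersetCard hx hs), if_neg hxt]
        have e3 : ∀ s' ∈ U.powersetCard mp,
            (if x ∈ insert x s' then (if x ∈ t then B * f0 ((insert x s').erase x) (t.erase x) else 0)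
             else if x ∈ t then (if t = insert x (insert x s') ∧
               insert x s' ∈ U.powersetCard (mp + 1) then G * wt ρ σ U (insert x s') else 0)
             else A * f1 (insert x s') t)
            = 0 := by
          intro s' hs'
          rw [if_pos (Finset.mem_insert_self x s'), if_neg hxt]
        rw [e1, Finset.sum_congr rfl e3, Finset.sum_const_zero, add_zero,
          wt_insert hx, if_neg hxt, WL_insert hx]
        show A * (wt ρ σ U t * Wm) = a * wt ρ σ U t * (a * Wm + c * Wq)
        rw [hA]
        field_simp

end Flow
section LocalLYM
open FinsetFamily
variable (hρ : ∀ j, 0 < ρ j) (hσ : ∀ j, 0 < σ j)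

include hρ hσ in
/-- Weighted local LYM inequality (multiplicative form). -/
lemma local_lym (U : Finset ℕ) (m : ℕ) (F : Finset (Finset ℕ))
    (hF : F ⊆ U.powersetCard (m + 1)) :
    tw ρ σ U F * WL ρ σ U m ≤ tw ρ σ U (∂ F) * WL ρ σ U (m + 1) := by
  classical
  obtain ⟨f, hfn, hfs, hfr, hfc⟩ := flow_exists hρ hσ U m
  have hshadow : ∂ F ⊆ U.powersetCard m := by
    intro s hs
    obtain ⟨t, ht, hst, hcard⟩ := Finset.mem_shadow_iff_exists_mem_card_add_one.1 hs
    have htl := Finset.mem_powersetCard.1 (hF ht)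
    rw [Finset.mem_powersetCard]
    exact ⟨hst.trans htl.1, by omega⟩
  calc tw ρ σ U F * WL ρ σ U m
      = ∑ t ∈ F, ∑ s ∈ U.powersetCard m, f s t := by
        rw [tw, Finset.sum_mul]
        exact Finset.sum_congr rfl fun t ht => (hfc t (hF ht)).symm
    _ = ∑ t ∈ F, ∑ s ∈ ∂ F, f s t := by
        refine Finset.sum_congr rfl fun t ht => ?_
        refine (Finset.sum_subset_zero_on_sdiff hshadow ?_ (fun _ _ => rfl)).symm
        intro s hs
        rw [Finset.mem_sdiff] at hs
        by_contra hne
        obtain ⟨hsl, htl, hst⟩ := hfs s t hne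
        refine hs.2 (Finset.mem_shadow_iff_exists_mem_card_add_one.2 ⟨t, ht, hst, ?_⟩)
        rw [(Finset.mem_powersetCard.1 htl).2, (Finset.mem_powersetCard.1 hsl).2]
    _ = ∑ s ∈ ∂ F, ∑ t ∈ F, f s t := Finset.sum_comm
    _ ≤ ∑ s ∈ ∂ F, ∑ t ∈ U.powersetCard (m + 1), f s t := by
        refine Finset.sum_le_sum fun s hs => ?_
        exact Finset.sum_le_sum_of_subset_of_nonneg hF fun t _ _ => hfn s t
    _ = tw ρ σ U (∂ F) * WL ρ σ U (m + 1) := by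
        rw [tw, Finset.sum_mul]
        exact Finset.sum_congr rfl fun s hs => hfr s (hshadow hs)

end LocalLYM

section Falling
open FinsetFamily

/-- Falling families: `fall A n j` lives in level `n - j`. -/
noncomputable def fall (A : Finset (Finset ℕ)) (n : ℕ) : ℕ → Finset (Finset ℕ)
  | 0 => A.filter fun s => s.card = n
  | j + 1 => A.filter (fun s => s.card = n - (j + 1)) ∪ ∂ (fall A n j)

lemma fall_zero (A : Finset (Finset ℕ)) (n : ℕ) :
    fall A n 0 = A.filter fun s => s.card = n := rfl

lemma fall_succ (A : Finset (Finset ℕ)) (n j : ℕ) :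
    fall A n (j + 1) = A.filter (fun s => s.card = n - (j + 1)) ∪ ∂ (fall A n j) := rfl

variable {U : Finset ℕ} {A : Finset (Finset ℕ)}
variable (hρ : ∀ j, 0 < ρ j) (hσ : ∀ j, 0 < σ j)
variable (hAU : ∀ s ∈ A, s ⊆ U)

include hAU in
lemma fall_subset_level (j : ℕ) (hj : j ≤ U.card) :
    fall A U.card j ⊆ U.powersetCard (U.card - j) := by
  induction j with
  | zero =>
    intro s hs
    rw [fall_zero, Finset.mem_filter] at hs
    exact Finset.mem_powersetCard.2 ⟨hAU s hs.1, by omega⟩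
  | succ j IH =>
    intro s hs
    rw [fall_succ, Finset.mem_union] at hs
    rcases hs with hs | hs
    · rw [Finset.mem_filter] at hs
      exact Finset.mem_powersetCard.2 ⟨hAU s hs.1, hs.2⟩
    · obtain ⟨t, ht, hst, hcard⟩ := Finset.mem_shadow_iff_exists_mem_card_add_one.1 hs
      have htl := Finset.mem_powersetCard.1 (IH (by omega) ht)
      exact Finset.mem_powersetCard.2 ⟨hst.trans htl.1, by omega⟩

lemma fall_subset_above (j : ℕ) : ∀ s ∈ fall A n j, ∃ t ∈ A, s ⊆ t := by
  induction j with
  | zero =>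
    intro s hs
    rw [fall_zero, Finset.mem_filter] at hs
    exact ⟨s, hs.1, Finset.Subset.refl s⟩
  | succ j IH =>
    intro s hs
    rw [fall_succ, Finset.mem_union] at hs
    rcases hs with hs | hs
    · exact ⟨s, (Finset.mem_filter.1 hs).1, Finset.Subset.refl s⟩
    · obtain ⟨u, hu, hsu, -⟩ := Finset.mem_shadow_iff_exists_mem_card_add_one.1 hs
      obtain ⟨t, ht, hut⟩ := IH u hu
      exact ⟨t, ht, hsu.trans hut⟩

include hρ hσ hAU in
lemma fall_bound (hA : IsAntichain (· ⊂ ·) (A : Set (Finset ℕ))) :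
    ∀ j ≤ U.card,
      ∑ i ∈ Finset.range (j + 1),
          tw ρ σ U (A.filter fun s => s.card = U.card - i) / WL ρ σ U (U.card - i) ≤
        tw ρ σ U (fall A U.card j) / WL ρ σ U (U.card - j) := by
  intro j
  induction j with
  | zero =>
    intro _
    rw [Finset.sum_range_one, fall_zero, Nat.sub_zero]
  | succ j IH =>
    intro hj
    have hWj : 0 < WL ρ σ U (U.card - j) := WL_pos hρ hσ (by omega)
    have hWj1 : 0 < WL ρ σ U (U.card - (j + 1)) := WL_pos hρ hσ (by omega)
    rw [Finset.sum_range_succ]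
    have hsucc : U.card - j = U.card - (j + 1) + 1 := by omega
    have hfallsub : fall A U.card j ⊆ U.powersetCard (U.card - (j + 1) + 1) := by
      rw [← hsucc]; exact fall_subset_level hAU j (by omega)
    have hllym := local_lym hρ hσ U (U.card - (j + 1)) (fall A U.card j) hfallsub
    have step1 : tw ρ σ U (fall A U.card j) / WL ρ σ U (U.card - j) ≤
        tw ρ σ U (∂ (fall A U.card j)) / WL ρ σ U (U.card - (j + 1)) := by
      rw [div_le_div_iff₀ hWj hWj1, hsucc]
      exact hllym
    have hdisj : Disjoint (A.filter fun s => s.card = U.card - (j + 1))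
        (∂ (fall A U.card j)) := by
      rw [Finset.disjoint_left]
      intro s hsA hsS
      obtain ⟨u, hu, hsu, hcard⟩ := Finset.mem_shadow_iff_exists_mem_card_add_one.1 hsS
      obtain ⟨t, ht, hut⟩ := fall_subset_above j u hu
      have hst : s ⊆ t := hsu.trans hut
      have hsne : s ≠ t := by
        intro h
        subst h
        have := Finset.card_le_card hut
        omega
      exact hA (Finset.mem_coe.2 (Finset.mem_filter.1 hsA).1) (Finset.mem_coe.2 ht) hsne
        (Finset.ssubset_iff_subset_ne.2 ⟨hst, hsne⟩)
    have hunion : tw ρ σ U (fall A U.card (j + 1)) =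
        tw ρ σ U (A.filter fun s => s.card = U.card - (j + 1)) +
          tw ρ σ U (∂ (fall A U.card j)) := by
      rw [fall_succ, tw, Finset.sum_union hdisj]; rfl
    calc ∑ i ∈ Finset.range (j + 1),
            tw ρ σ U (A.filter fun s => s.card = U.card - i) / WL ρ σ U (U.card - i) +
          tw ρ σ U (A.filter fun s => s.card = U.card - (j + 1)) / WL ρ σ U (U.card - (j + 1))
        ≤ tw ρ σ U (fall A U.card j) / WL ρ σ U (U.card - j) +
          tw ρ σ U (A.filter fun s => s.card = U.card - (j + 1)) / WL ρ σ U (U.card - (j + 1)) := by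
          exact add_le_add_left (IH (by omega)) _
      _ ≤ tw ρ σ U (∂ (fall A U.card j)) / WL ρ σ U (U.card - (j + 1)) +
          tw ρ σ U (A.filter fun s => s.card = U.card - (j + 1)) / WL ρ σ U (U.card - (j + 1)) := by
          exact add_le_add_left step1 _
      _ = tw ρ σ U (fall A U.card (j + 1)) / WL ρ σ U (U.card - (j + 1)) := by
          rw [hunion, add_div, add_comm]

include hρ hσ hAU in
lemma lym_nat (hA : IsAntichain (· ⊂ ·) (A : Set (Finset ℕ))) :
    ∑ ℓ ∈ Finset.range (U.card + 1),
      tw ρ σ U (A.filter fun s => s.card = ℓ) / WL ρ σ U ℓ ≤ 1 := by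
  have hb := fall_bound hρ hσ hAU hA U.card (le_refl _)
  have hre : ∑ ℓ ∈ Finset.range (U.card + 1),
      tw ρ σ U (A.filter fun s => s.card = ℓ) / WL ρ σ U ℓ =
      ∑ i ∈ Finset.range (U.card + 1),
        tw ρ σ U (A.filter fun s => s.card = U.card - i) / WL ρ σ U (U.card - i) := by
    rw [← Finset.sum_range_reflect]
    refine Finset.sum_congr rfl fun i hi => ?_
    rw [Finset.mem_range] at hi
    congr 2 <;> omega
  rw [hre]
  refine hb.trans ?_
  have hsub : fall A U.card U.card ⊆ U.powersetCard 0 := by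
    have := fall_subset_level hAU U.card (le_refl _)
    rwa [Nat.sub_self] at this
  have htwle : tw ρ σ U (fall A U.card U.card) ≤ WL ρ σ U 0 := by
    rw [WL]
    exact Finset.sum_le_sum_of_subset_of_nonneg hsub fun t _ _ => wt_nonneg hρ hσ U t
  rw [Nat.sub_self, div_le_one (WL_pos hρ hσ (Nat.zero_le _))]
  exact htwle

end Falling
end LymAux

/-- LYM inequality for general product measures: for a non-trivial product
distribution `P` on `{0,1}^n` and any antichain `A`,
`∑_ℓ Pr[z ∈ A | |z| = ℓ] ≤ 1`. -/
theorem lym_product_measure (n : ℕ) (p : Fin n → ℝ)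
    (hp : ∀ j, 0 < p j ∧ p j < 1)
    (A : Finset (Finset (Fin n)))
    (hA : IsAntichain (· ⊂ ·) (A : Set (Finset (Fin n)))) :
    ∑ ℓ ∈ Finset.range (n + 1),
      (∑ s ∈ A.filter (fun s => s.card = ℓ), ∏ j, if j ∈ s then p j else 1 - p j) /
        (∑ s ∈ (Finset.univ : Finset (Fin n)).powersetCard ℓ,
          ∏ j, if j ∈ s then p j else 1 - p j) ≤ 1 := by

  classical
  set ρ : ℕ → ℝ := fun j => if h : j < n then p ⟨j, h⟩ else 1 / 2 with hρdef
  set σ : ℕ → ℝ := fun j => if h : j < n then 1 - p ⟨j, h⟩ else 1 / 2 with hσdef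
  have hρ : ∀ j, 0 < ρ j := by
    intro j
    rw [hρdef]
    by_cases h : j < n
    · simpa [h] using (hp ⟨j, h⟩).1
    · norm_num [h]
  have hσ : ∀ j, 0 < σ j := by
    intro j
    rw [hσdef]
    by_cases h : j < n
    · simpa [h] using (hp ⟨j, h⟩).2
    · norm_num [h]
  set E := (Finset.mapEmbedding (Fin.valEmbedding (n := n))).toEmbedding with hE
  have hEapp : ∀ s : Finset (Fin n), E s = s.map Fin.valEmbedding := fun s => rfl
  set A' : Finset (Finset ℕ) := A.map E with hA'def
  set U : Finset ℕ := Finset.range n with hUdef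
  have hU : U = (Finset.univ : Finset (Fin n)).map Fin.valEmbedding := by
    rw [Fin.map_valEmbedding_univ, hUdef, Nat.Iio_eq_range]
  have hwt : ∀ s : Finset (Fin n),
      LymAux.wt ρ σ U (E s) = ∏ j, if j ∈ s then p j else 1 - p j := by
    intro s
    rw [LymAux.wt, hUdef, ← Fin.prod_univ_eq_prod_range (fun j => if j ∈ E s then ρ j else σ j) n]
    refine Finset.prod_congr rfl fun i _ => ?_
    have hmem : (↑i ∈ E s) ↔ i ∈ s := by
      rw [hEapp]
      exact Finset.mem_map' Fin.valEmbedding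
    by_cases h : i ∈ s
    · rw [if_pos (hmem.2 h), if_pos h, hρdef]
      simp [i.isLt]
    · rw [if_neg (fun hc => h (hmem.1 hc)), if_neg h, hσdef]
      simp [i.isLt]
  have hAU : ∀ s ∈ A', s ⊆ U := by
    intro s' hs'
    obtain ⟨s, hs, rfl⟩ := Finset.mem_map.1 hs'
    intro j hj
    rw [hEapp] at hj
    obtain ⟨i, hi, rfl⟩ := Finset.mem_map.1 hj
    rw [hUdef, Finset.mem_range]
    exact i.isLt
  have hA' : IsAntichain (· ⊂ ·) (A' : Set (Finset ℕ)) := by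
    rintro s' hs' t' ht' hne hss
    rw [hA'def, Finset.coe_map] at hs' ht'
    obtain ⟨s, hs, rfl⟩ := hs'
    obtain ⟨t, ht, rfl⟩ := ht'
    have hst : s ⊂ t := by
      rw [hEapp, hEapp, Finset.map_ssubset_map] at hss
      exact hss
    exact hA hs ht (fun h => hne (by rw [h])) hst
  have key := LymAux.lym_nat hρ hσ hAU hA'
  have hcard : U.card = n := by rw [hUdef]; exact Finset.card_range n
  rw [hcard] at key
  refine le_trans (le_of_eq ?_) key
  refine Finset.sum_congr rfl fun ℓ _ => ?_
  congr 1
  · -- numerators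
    rw [LymAux.tw, hA'def, Finset.filter_map, Finset.sum_map]
    have hfil : A.filter ((fun (s : Finset ℕ) => s.card = ℓ) ∘ E) =
        A.filter (fun s => s.card = ℓ) := by
      refine Finset.filter_congr fun s _ => ?_
      simp [hEapp, Finset.card_map]
    rw [hfil]
    exact Finset.sum_congr rfl fun s _ => (hwt s).symm
  · -- denominators
    have hpc : U.powersetCard ℓ = (Finset.univ.powersetCard ℓ).map E := by
      rw [hU, Finset.powersetCard_map, ← hE]
    rw [LymAux.WL, LymAux.tw, hpc, Finset.sum_map]
    exact Finset.sum_congr rfl fun s _ => (hwt s).symm
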